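/- Let μ_{i,j} > 0 and m̄_i > 0 satisfy, for every i, 1/m̄_i = (1/N_t)·Σ_{n,k} σ_{i,n,k}μ_{n,k}/(1+σ_{i,n,k}μ_{n,k}m̄_i) + 1, and set γ_{i,j} = σ_{i,i,j}μ_{i,j}m̄_i. Define m̄'_i = m̄_i² / (1 − (1/N_t)·Σ_{n,k} (σ_{i,n,k}μ_{n,k}m̄_i)²/(1+σ_{i,n,k}μ_{n,k}m̄_i)²), G_{i,n,k} = σ_{i,n,k}/(1+μ_{n,k}σ_{i,n,k}m̄_i)², let Γ be the NK×NK diagonal matrix with diagonal entries γ_{i,j}/(σ_{i,i,j}·G_{i,i,j}·m̄_i²), and let Δ be the NK×NK matrix whose ((i,j),(n,k)) entry is 0 if (n,k)=(i,j) and (1/N_t)·G_{n,i,j}·G_{n,n,k}·m̄'_n otherwise. Then the spectral radius of ΓΔ is strictly less than 1 and the matrix I − ΓΔ is invertible. -/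

import Mathlib

open Finset Matrix

/-- For any pair `(γ, μ)` satisfying the ROBF fixed-point system, the
matrix `ΓΔ` has spectral radius strictly less than one, and `I - ΓΔ` is invertible. -/
theorem robf_gamma_delta_spectral_radius
    (N K Nt : ℕ) (hNt : 0 < Nt)
    (σ : Fin N → Fin N → Fin K → ℝ) (hσ : ∀ i n k, 0 < σ i n k)
    (μ : Fin N → Fin K → ℝ) (hμ : ∀ i j, 0 < μ i j)
    (m : Fin N → ℝ) (hm : ∀ i, 0 < m i)
    (hfp : ∀ i : Fin N, 1 / m i =
      (1 / (Nt : ℝ)) * ∑ n, ∑ k, σ i n k * μ n k / (1 + σ i n k * μ n k * m i) + 1)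
    (γ : Fin N → Fin K → ℝ) (hγ : ∀ i j, γ i j = σ i i j * μ i j * m i)
    (m' : Fin N → ℝ)
    (hm' : ∀ i, m' i = (m i) ^ 2 /
      (1 - (1 / (Nt : ℝ)) * ∑ n, ∑ k,
        (σ i n k * μ n k * m i) ^ 2 / (1 + σ i n k * μ n k * m i) ^ 2))
    (G : Fin N → Fin N → Fin K → ℝ)
    (hG : ∀ i n k, G i n k = σ i n k / (1 + μ n k * σ i n k * m i) ^ 2)
    (Γ Δ : Matrix (Fin N × Fin K) (Fin N × Fin K) ℝ)
    (hΓ : Γ = Matrix.diagonal fun p : Fin N × Fin K =>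
      γ p.1 p.2 / (σ p.1 p.1 p.2 * G p.1 p.1 p.2 * (m p.1) ^ 2))
    (hΔ : ∀ p q : Fin N × Fin K,
      Δ p q = if q = p then 0
        else (1 / (Nt : ℝ)) * G q.1 p.1 p.2 * G q.1 q.1 q.2 * m' q.1) :
    (∀ z ∈ spectrum ℂ ((Γ * Δ).map Complex.ofReal), ‖z‖ < 1) ∧
    IsUnit (1 - Γ * Δ) := by

  have hNt' : (0:ℝ) < (Nt:ℝ) := by exact_mod_cast hNt
  have hxpos : ∀ (i n : Fin N) (k : Fin K), 0 < σ i n k * μ n k * m i :=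
    fun i n k => mul_pos (mul_pos (hσ i n k) (hμ n k)) (hm i)
  have hdpos : ∀ (i n : Fin N) (k : Fin K), (0:ℝ) < 1 + σ i n k * μ n k * m i :=
    fun i n k => by linarith [hxpos i n k]
  have hGpos : ∀ (i n : Fin N) (k : Fin K), 0 < G i n k := by
    intro i n k
    rw [hG]
    have h1 : μ n k * σ i n k * m i = σ i n k * μ n k * m i := by ring
    rw [h1]
    exact div_pos (hσ i n k) (pow_pos (hdpos i n k) 2)
  -- T i = 1 - m i
  have hT : ∀ i : Fin N, (1 / (Nt : ℝ)) * ∑ p : Fin N × Fin K,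
      (σ i p.1 p.2 * μ p.1 p.2 * m i) / (1 + σ i p.1 p.2 * μ p.1 p.2 * m i) = 1 - m i := by
    intro i
    have hmne : m i ≠ 0 := ne_of_gt (hm i)
    have h1 : ∑ p : Fin N × Fin K,
        (σ i p.1 p.2 * μ p.1 p.2 * m i) / (1 + σ i p.1 p.2 * μ p.1 p.2 * m i)
        = m i * ∑ n, ∑ k, σ i n k * μ n k / (1 + σ i n k * μ n k * m i) := by
      rw [Fintype.sum_prod_type, Finset.mul_sum]
      refine Finset.sum_congr rfl fun n _ => ?_
      rw [Finset.mul_sum]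
      refine Finset.sum_congr rfl fun k _ => ?_
      show σ i n k * μ n k * m i / (1 + σ i n k * μ n k * m i)
          = m i * (σ i n k * μ n k / (1 + σ i n k * μ n k * m i))
      ring
    have h2 : (1 / (Nt : ℝ)) * ∑ n, ∑ k, σ i n k * μ n k / (1 + σ i n k * μ n k * m i)
        = 1 / m i - 1 := by linarith [hfp i]
    rw [h1, show (1 / (Nt : ℝ)) * (m i * ∑ n, ∑ k, σ i n k * μ n k / (1 + σ i n k * μ n k * m i))
        = m i * ((1 / (Nt : ℝ)) * ∑ n, ∑ k, σ i n k * μ n k / (1 + σ i n k * μ n k * m i)) by ring,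
      h2, mul_sub, mul_one, mul_one_div, div_self hmne]
  have hm'2 : ∀ i : Fin N, m' i = (m i) ^ 2 / (1 - (1 / (Nt : ℝ)) * ∑ p : Fin N × Fin K,
      (σ i p.1 p.2 * μ p.1 p.2 * m i) ^ 2 / (1 + σ i p.1 p.2 * μ p.1 p.2 * m i) ^ 2) := by
    intro i
    rw [hm' i, Fintype.sum_prod_type]
  have hS : ∀ i : Fin N, (1 / (Nt : ℝ)) * ∑ p : Fin N × Fin K,
      (σ i p.1 p.2 * μ p.1 p.2 * m i) ^ 2 / (1 + σ i p.1 p.2 * μ p.1 p.2 * m i) ^ 2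
      ≤ 1 - m i := by
    intro i
    rw [← hT i]
    apply mul_le_mul_of_nonneg_left _ (by positivity)
    apply Finset.sum_le_sum
    intro p _
    have hx : 0 < σ i p.1 p.2 * μ p.1 p.2 * m i := hxpos i p.1 p.2
    have hd : (0:ℝ) < 1 + σ i p.1 p.2 * μ p.1 p.2 * m i := by linarith
    rw [← div_pow]
    have ht1 : σ i p.1 p.2 * μ p.1 p.2 * m i / (1 + σ i p.1 p.2 * μ p.1 p.2 * m i) ≤ 1 := by
      rw [div_le_one hd]; linarith
    have ht0 : 0 ≤ σ i p.1 p.2 * μ p.1 p.2 * m i / (1 + σ i p.1 p.2 * μ p.1 p.2 * m i) := by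
      positivity
    nlinarith [ht0, ht1]
  have h1S : ∀ i : Fin N, 0 < 1 - (1 / (Nt : ℝ)) * ∑ p : Fin N × Fin K,
      (σ i p.1 p.2 * μ p.1 p.2 * m i) ^ 2 / (1 + σ i p.1 p.2 * μ p.1 p.2 * m i) ^ 2 := by
    intro i
    have h1 := hS i
    have h2 := hm i
    linarith
  have hm'pos : ∀ i : Fin N, 0 < m' i := by
    intro i
    rw [hm'2 i]
    exact div_pos (pow_pos (hm i) 2) (h1S i)
  have hMuG : ∀ i : Fin N, ∑ p : Fin N × Fin K, μ p.1 p.2 * G i p.1 p.2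
      = (∑ p : Fin N × Fin K,
          (σ i p.1 p.2 * μ p.1 p.2 * m i) / (1 + σ i p.1 p.2 * μ p.1 p.2 * m i)
        - ∑ p : Fin N × Fin K,
          (σ i p.1 p.2 * μ p.1 p.2 * m i) ^ 2 / (1 + σ i p.1 p.2 * μ p.1 p.2 * m i) ^ 2)
        / m i := by
    intro i
    rw [← Finset.sum_sub_distrib, Finset.sum_div]
    refine Finset.sum_congr rfl fun p _ => ?_
    rw [hG]
    have hd : (0:ℝ) < 1 + σ i p.1 p.2 * μ p.1 p.2 * m i := hdpos i p.1 p.2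
    have hd' : (1:ℝ) + σ i p.1 p.2 * μ p.1 p.2 * m i ≠ 0 := ne_of_gt hd
    have hd'' : (1:ℝ) + μ p.1 p.2 * σ i p.1 p.2 * m i ≠ 0 := by
      rw [show μ p.1 p.2 * σ i p.1 p.2 * m i = σ i p.1 p.2 * μ p.1 p.2 * m i by ring]
      exact hd'
    have hmne : m i ≠ 0 := ne_of_gt (hm i)
    field_simp
    ring
  -- key inequality
  have hKey : ∀ i : Fin N,
      m' i * ((1 / (Nt : ℝ)) * ∑ p : Fin N × Fin K, μ p.1 p.2 * G i p.1 p.2) < m i := by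
    intro i
    have hMuG' : (1 / (Nt : ℝ)) * ∑ p : Fin N × Fin K, μ p.1 p.2 * G i p.1 p.2
        = ((1 - m i) - (1 / (Nt : ℝ)) * ∑ p : Fin N × Fin K,
            (σ i p.1 p.2 * μ p.1 p.2 * m i) ^ 2 / (1 + σ i p.1 p.2 * μ p.1 p.2 * m i) ^ 2)
          / m i := by
      rw [hMuG i, ← hT i]
      ring
    rw [hMuG', hm'2 i]
    have h1 := h1S i
    have h2 := hm i
    have h3 := hS i
    set S := (1 / (Nt : ℝ)) * ∑ p : Fin N × Fin K,
      (σ i p.1 p.2 * μ p.1 p.2 * m i) ^ 2 / (1 + σ i p.1 p.2 * μ p.1 p.2 * m i) ^ 2 with hSdef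
    rw [div_mul_div_comm, div_lt_iff₀ (mul_pos h1 h2)]
    nlinarith [pow_pos h2 2, pow_pos h2 3]
  -- weights
  set u : Fin N × Fin K → ℝ := fun p => G p.1 p.1 p.2 * m p.1 with hu
  have hupos : ∀ p : Fin N × Fin K, 0 < u p := fun p => mul_pos (hGpos p.1 p.1 p.2) (hm p.1)
  have hA : ∀ p q : Fin N × Fin K, (Γ * Δ) p q =
      (γ p.1 p.2 / (σ p.1 p.1 p.2 * G p.1 p.1 p.2 * (m p.1) ^ 2)) * Δ p q := by
    intro p q
    rw [hΓ, Matrix.diagonal_mul]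
  have hcoef : ∀ p : Fin N × Fin K,
      0 < γ p.1 p.2 / (σ p.1 p.1 p.2 * G p.1 p.1 p.2 * (m p.1) ^ 2) := by
    intro p
    have hγpos : 0 < γ p.1 p.2 := by rw [hγ]; exact hxpos p.1 p.1 p.2
    exact div_pos hγpos
      (mul_pos (mul_pos (hσ p.1 p.1 p.2) (hGpos p.1 p.1 p.2)) (pow_pos (hm p.1) 2))
  have hEnt : ∀ p q : Fin N × Fin K,
      0 < 1 / (Nt:ℝ) * G q.1 p.1 p.2 * G q.1 q.1 q.2 * m' q.1 :=
    fun p q => mul_pos (mul_pos (mul_pos (by positivity) (hGpos q.1 p.1 p.2))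
      (hGpos q.1 q.1 q.2)) (hm'pos q.1)
  have hApos : ∀ p q : Fin N × Fin K, 0 ≤ (Γ * Δ) p q := by
    intro p q
    rw [hA, hΔ]
    rcases eq_or_ne q p with h | h
    · simp [h]
    · rw [if_neg h]
      exact (mul_pos (hcoef p) (hEnt p q)).le
  have huA : ∀ p q : Fin N × Fin K, u p * (Γ * Δ) p q =
      if q = p then 0
      else μ p.1 p.2 * (1 / (Nt : ℝ) * G q.1 p.1 p.2 * G q.1 q.1 q.2 * m' q.1) := by
    intro p q
    rw [hA, hΔ]
    rcases eq_or_ne q p with h | h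
    · simp [h]
    · rw [if_neg h, if_neg h]
      have h1 : u p * (γ p.1 p.2 / (σ p.1 p.1 p.2 * G p.1 p.1 p.2 * (m p.1) ^ 2))
          = μ p.1 p.2 := by
        show G p.1 p.1 p.2 * m p.1 * (γ p.1 p.2 / (σ p.1 p.1 p.2 * G p.1 p.1 p.2 * (m p.1) ^ 2))
            = μ p.1 p.2
        rw [hγ]
        have hσne : σ p.1 p.1 p.2 ≠ 0 := ne_of_gt (hσ p.1 p.1 p.2)
        have hGne : G p.1 p.1 p.2 ≠ 0 := ne_of_gt (hGpos p.1 p.1 p.2)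
        have hmne : m p.1 ≠ 0 := ne_of_gt (hm p.1)
        field_simp
      rw [← mul_assoc, h1]
  have hRow : ∀ q : Fin N × Fin K, ∑ p : Fin N × Fin K, u p * (Γ * Δ) p q < u q := by
    intro q
    have hstep : ∑ p : Fin N × Fin K, u p * (Γ * Δ) p q
        ≤ ∑ p : Fin N × Fin K,
          μ p.1 p.2 * (1 / (Nt : ℝ) * G q.1 p.1 p.2 * G q.1 q.1 q.2 * m' q.1) := by
      apply Finset.sum_le_sum
      intro p _
      rw [huA]
      rcases eq_or_ne q p with h | h
      · rw [if_pos h]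
        exact (mul_pos (hμ p.1 p.2) (hEnt p q)).le
      · rw [if_neg h]
    have hsum : ∑ p : Fin N × Fin K,
        μ p.1 p.2 * (1 / (Nt : ℝ) * G q.1 p.1 p.2 * G q.1 q.1 q.2 * m' q.1)
        = G q.1 q.1 q.2 * (m' q.1 * ((1 / (Nt : ℝ)) *
            ∑ p : Fin N × Fin K, μ p.1 p.2 * G q.1 p.1 p.2)) := by
      simp only [Finset.mul_sum]
      exact Finset.sum_congr rfl fun p _ => by ring
    calc ∑ p : Fin N × Fin K, u p * (Γ * Δ) p q
        ≤ G q.1 q.1 q.2 * (m' q.1 * ((1 / (Nt : ℝ)) *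
            ∑ p : Fin N × Fin K, μ p.1 p.2 * G q.1 p.1 p.2)) := by rw [← hsum]; exact hstep
      _ < G q.1 q.1 q.2 * m q.1 :=
          mul_lt_mul_of_pos_left (hKey q.1) (hGpos q.1 q.1 q.2)
      _ = u q := rfl
  -- spectral bound
  have main : ∀ z ∈ spectrum ℂ ((Γ * Δ).map Complex.ofReal), ‖z‖ < 1 := by
    intro z hz
    rw [spectrum.mem_iff, Matrix.isUnit_iff_isUnit_det, isUnit_iff_ne_zero, not_not] at hz
    obtain ⟨v, hv0, hv⟩ := Matrix.exists_mulVec_eq_zero_iff.mpr hz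
    have hBv : ((Γ * Δ).map Complex.ofReal) *ᵥ v = z • v := by
      rw [Algebra.algebraMap_eq_smul_one, Matrix.sub_mulVec, Matrix.smul_mulVec,
        Matrix.one_mulVec] at hv
      exact (sub_eq_zero.mp hv).symm
    have hcomp : ∀ p : Fin N × Fin K,
        ‖z‖ * ‖v p‖ ≤ ∑ q : Fin N × Fin K, (Γ * Δ) p q * ‖v q‖ := by
      intro p
      have h1 : z * v p = ∑ q : Fin N × Fin K, ((Γ * Δ) p q : ℂ) * v q := by
        have h2 := congrFun hBv p
        simp only [Matrix.mulVec, dotProduct, Matrix.map_apply, Pi.smul_apply,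
          smul_eq_mul] at h2
        exact h2.symm
      calc ‖z‖ * ‖v p‖ = ‖z * v p‖ := (norm_mul z (v p)).symm
        _ = ‖∑ q : Fin N × Fin K, ((Γ * Δ) p q : ℂ) * v q‖ := by rw [h1]
        _ ≤ ∑ q : Fin N × Fin K, ‖((Γ * Δ) p q : ℂ) * v q‖ := norm_sum_le _ _
        _ = ∑ q : Fin N × Fin K, (Γ * Δ) p q * ‖v q‖ := by
            refine Finset.sum_congr rfl fun q _ => ?_
            rw [norm_mul, Complex.norm_real, Real.norm_eq_abs, abs_of_nonneg (hApos p q)]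
    obtain ⟨q0, hq0⟩ : ∃ q0, v q0 ≠ 0 := Function.ne_iff.mp hv0
    have hyq0 : 0 < ‖v q0‖ := norm_pos_iff.mpr hq0
    have hTy : 0 < ∑ q : Fin N × Fin K, u q * ‖v q‖ := by
      apply Finset.sum_pos'
      · intro q _
        exact mul_nonneg (hupos q).le (norm_nonneg _)
      · exact ⟨q0, Finset.mem_univ q0, mul_pos (hupos q0) hyq0⟩
    have hchain : ‖z‖ * ∑ q : Fin N × Fin K, u q * ‖v q‖
        < ∑ q : Fin N × Fin K, u q * ‖v q‖ := by
      calc ‖z‖ * ∑ q : Fin N × Fin K, u q * ‖v q‖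
          = ∑ p : Fin N × Fin K, u p * (‖z‖ * ‖v p‖) := by
            rw [Finset.mul_sum]; exact Finset.sum_congr rfl fun p _ => by ring
        _ ≤ ∑ p : Fin N × Fin K, u p * ∑ q : Fin N × Fin K, (Γ * Δ) p q * ‖v q‖ := by
            apply Finset.sum_le_sum
            intro p _
            exact mul_le_mul_of_nonneg_left (hcomp p) (hupos p).le
        _ = ∑ q : Fin N × Fin K, (∑ p : Fin N × Fin K, u p * (Γ * Δ) p q) * ‖v q‖ := by
            simp only [Finset.mul_sum, Finset.sum_mul]
            rw [Finset.sum_comm]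
            exact Finset.sum_congr rfl fun q _ =>
              Finset.sum_congr rfl fun p _ => by ring
        _ < ∑ q : Fin N × Fin K, u q * ‖v q‖ := by
            apply Finset.sum_lt_sum
            · intro q _
              exact mul_le_mul_of_nonneg_right (hRow q).le (norm_nonneg _)
            · exact ⟨q0, Finset.mem_univ q0,
                mul_lt_mul_of_pos_right (hRow q0) hyq0⟩
    by_contra hcon
    push_neg at hcon
    nlinarith [hTy, hchain, hcon]
  refine ⟨main, ?_⟩
  by_contra hns
  rw [Matrix.isUnit_iff_isUnit_det, isUnit_iff_ne_zero, not_not] at hns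
  have h1 : (1:ℂ) ∈ spectrum ℂ ((Γ * Δ).map Complex.ofReal) := by
    rw [spectrum.mem_iff, Matrix.isUnit_iff_isUnit_det, isUnit_iff_ne_zero, not_not]
    have heq : (algebraMap ℂ (Matrix (Fin N × Fin K) (Fin N × Fin K) ℂ)) 1
        - (Γ * Δ).map Complex.ofReal
        = (Complex.ofRealHom).mapMatrix (1 - Γ * Δ) := by
      rw [_root_.map_one, map_sub, _root_.map_one]
      rfl
    rw [heq, ← RingHom.map_det, hns, map_zero]
  have hfin := main 1 h1
  rw [norm_one] at hfin
  exact lt_irrefl 1 hfin
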